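/- arXiv:1711.00790 — 5 statements merged into one kernel-verified Lean document; each statement's English description precedes it below -/
import Mathlib

section
/- If f : ℤ³≤0 → ℝ>0 satisfies the cube recurrence, then the conductance function C^f is Y−Δ consistent; that is, for all (i,j,k) ∈ ℤ³≤0, C^f_a(i,j,k)·c^f_a(i−1,j,k) = C^f_b(i,j,k)·c^f_b(i,j−1,k) = C^f_c(i,j,k)·c^f_c(i,j,k−1) = C^f_a(i,j,k)C^f_b(i,j,k) + C^f_a(i,j,k)C^f_c(i,j,k) + C^f_b(i,j,k)C^f_c(i,j,k). -/
open scoped BigOperators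
open scoped Classical

noncomputable section

/-- Points of `ℤ³`. -/
abbrev Z3 : Type := ℤ × ℤ × ℤ

/-- The nonpositive octant `ℤ³_{≤ 0}`. -/
def oct (p : Z3) : Prop := p.1 ≤ 0 ∧ p.2.1 ≤ 0 ∧ p.2.2 ≤ 0

/-- The coordinate sum `i + j + k`. -/
def sum3 (p : Z3) : ℤ := p.1 + p.2.1 + p.2.2

/-- A conductance function: the conductances `C_a, C_b, C_c` of the long diagonals.
The short diagonal conductances are their inverses, `c_q = 1/C_q`. -/
structure Conduct where
  Ca : Z3 → ℝ
  Cb : Z3 → ℝ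
  Cc : Z3 → ℝ

namespace Conduct

/-- Positivity of a conductance function on the nonpositive octant. -/
def Pos (C : Conduct) : Prop :=
  ∀ p : Z3, oct p → 0 < C.Ca p ∧ 0 < C.Cb p ∧ 0 < C.Cc p

/-- `S(i,j,k) = C_a C_b + C_a C_c + C_b C_c` at `(i,j,k)`. -/
def S (C : Conduct) (p : Z3) : ℝ :=
  C.Ca p * C.Cb p + C.Ca p * C.Cc p + C.Cb p * C.Cc p

/-- `Y-Δ` consistency: `C_a(i,j,k) c_a(i-1,j,k) = C_b(i,j,k) c_b(i,j-1,k)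
  = C_c(i,j,k) c_c(i,j,k-1) = S(i,j,k)`, where `c_q = 1/C_q`. -/
def YD (C : Conduct) : Prop :=
  ∀ p : Z3, oct p →
    C.Ca p * (C.Ca (p + (-1, 0, 0)))⁻¹ = C.S p ∧
    C.Cb p * (C.Cb (p + (0, -1, 0)))⁻¹ = C.S p ∧
    C.Cc p * (C.Cc (p + (0, 0, -1)))⁻¹ = C.S p

/-- `Δ(i,j,k) = C_b(i,j-1,k)C_c(i,j,k-1) + C_a(i-1,j,k)C_c(i,j,k-1) + C_a(i-1,j,k)C_b(i,j-1,k)`. -/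
def Δ (C : Conduct) (p : Z3) : ℝ :=
  C.Cb (p + (0, -1, 0)) * C.Cc (p + (0, 0, -1)) +
    C.Ca (p + (-1, 0, 0)) * C.Cc (p + (0, 0, -1)) +
    C.Ca (p + (-1, 0, 0)) * C.Cb (p + (0, -1, 0))

/-- `U(i,j,k) = C_b(i,j-1,k)C_c(i,j,k-1)/Δ(i,j,k)`. -/
def U (C : Conduct) (p : Z3) : ℝ :=
  C.Cb (p + (0, -1, 0)) * C.Cc (p + (0, 0, -1)) / C.Δ p

/-- `V(i,j,k) = C_a(i-1,j,k)C_c(i,j,k-1)/Δ(i,j,k)`. -/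
def V (C : Conduct) (p : Z3) : ℝ :=
  C.Ca (p + (-1, 0, 0)) * C.Cc (p + (0, 0, -1)) / C.Δ p

/-- `W(i,j,k) = C_a(i-1,j,k)C_b(i,j-1,k)/Δ(i,j,k)`. -/
def W (C : Conduct) (p : Z3) : ℝ :=
  C.Ca (p + (-1, 0, 0)) * C.Cb (p + (0, -1, 0)) / C.Δ p

/-- The translated conductance function `C^μ`, `C^μ_q(p) = C_q(p + μ)`. -/
def tr (C : Conduct) (μ : Z3) : Conduct :=
  ⟨fun p => C.Ca (p + μ), fun p => C.Cb (p + μ), fun p => C.Cc (p + μ)⟩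

end Conduct

/-- `f : ℤ³_{≤0} → ℝ` satisfies the cube recurrence. -/
def CubeRec (f : Z3 → ℝ) : Prop :=
  ∀ p : Z3, oct p →
    f p * f (p + (-1, -1, -1)) =
      f (p + (-1, 0, 0)) * f (p + (0, -1, -1)) +
        f (p + (0, -1, 0)) * f (p + (-1, 0, -1)) +
        f (p + (0, 0, -1)) * f (p + (-1, -1, 0))

/-- Positivity on the nonpositive octant. -/
def PosOn (f : Z3 → ℝ) : Prop := ∀ p : Z3, oct p → 0 < f p

/-- The conductance function `C^f` associated to a solution `f` of the cube recurrence. -/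
def Cf (f : Z3 → ℝ) : Conduct where
  Ca p := f (p + (0, -1, 0)) * f (p + (0, 0, -1)) / (f p * f (p + (0, -1, -1)))
  Cb p := f (p + (-1, 0, 0)) * f (p + (0, 0, -1)) / (f p * f (p + (-1, 0, -1)))
  Cc p := f (p + (-1, 0, 0)) * f (p + (0, -1, 0)) / (f p * f (p + (-1, -1, 0)))

/-! ### Rhombi and their diagonals -/

/-- Long diagonal `E_a(i,j,k) = {(i,j-1,k),(i,j,k-1)}`. -/
def Ea (p : Z3) : Sym2 Z3 := s(p + (0, -1, 0), p + (0, 0, -1))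
/-- Long diagonal `E_b(i,j,k) = {(i-1,j,k),(i,j,k-1)}`. -/
def Eb (p : Z3) : Sym2 Z3 := s(p + (-1, 0, 0), p + (0, 0, -1))
/-- Long diagonal `E_c(i,j,k) = {(i-1,j,k),(i,j-1,k)}`. -/
def Ec (p : Z3) : Sym2 Z3 := s(p + (-1, 0, 0), p + (0, -1, 0))
/-- Short diagonal `e_a(i,j,k) = {(i,j,k),(i,j-1,k-1)}`. -/
def ea (p : Z3) : Sym2 Z3 := s(p, p + (0, -1, -1))
/-- Short diagonal `e_b(i,j,k) = {(i,j,k),(i-1,j,k-1)}`. -/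
def eb (p : Z3) : Sym2 Z3 := s(p, p + (-1, 0, -1))
/-- Short diagonal `e_c(i,j,k) = {(i,j,k),(i-1,j-1,k)}`. -/
def ec (p : Z3) : Sym2 Z3 := s(p, p + (-1, -1, 0))

/-- The rhombus `r_a(i,j,k)`. -/
def rhA (p : Z3) : Set Z3 := {p, p + (0, -1, 0), p + (0, 0, -1), p + (0, -1, -1)}
/-- The rhombus `r_b(i,j,k)`. -/
def rhB (p : Z3) : Set Z3 := {p, p + (-1, 0, 0), p + (0, 0, -1), p + (-1, 0, -1)}
/-- The rhombus `r_c(i,j,k)`. -/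
def rhC (p : Z3) : Set Z3 := {p, p + (-1, 0, 0), p + (0, -1, 0), p + (-1, -1, 0)}

/-! ### Initial conditions -/

/-- The data of a downward closed subset `ℒ ⊆ ℤ³_{≤0}` with finite complement.  It
determines the set of initial conditions `ℐ` and the complement `𝒰`. -/
structure LowerData where
  L : Set Z3
  sub : ∀ p ∈ L, oct p
  dc : ∀ p ∈ L, ∀ q : Z3, q ≤ p → q ∈ L
  cofin : {p : Z3 | oct p ∧ p ∉ L}.Finite

/-- The set of initial conditions `ℐ = {p ∈ ℒ : p + (1,1,1) ∉ ℒ}`. -/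
def LowerData.I (D : LowerData) : Set Z3 := {p ∈ D.L | p + (1, 1, 1) ∉ D.L}

/-- The complement `𝒰 = ℤ³_{≤0} \ ℒ`. -/
def LowerData.U (D : LowerData) : Set Z3 := {p : Z3 | oct p ∧ p ∉ D.L}

/-! ### Groves -/

/-- The set of diagonals of all rhombi contained in `I` (the edges of `Γ_ℐ`). -/
def allDiag (I : Set Z3) : Set (Sym2 Z3) :=
  {e | ∃ p : Z3,
    (rhA p ⊆ I ∧ (e = Ea p ∨ e = ea p)) ∨
    (rhB p ⊆ I ∧ (e = Eb p ∨ e = eb p)) ∨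
    (rhC p ⊆ I ∧ (e = Ec p ∨ e = ec p))}

/-- The graph on `ℤ³` with the given edge set. -/
def graphOf (E : Set (Sym2 Z3)) : SimpleGraph Z3 where
  Adj p q := p ≠ q ∧ s(p, q) ∈ E
  symm := by
    constructor
    intro p q h
    exact ⟨h.1.symm, by rw [Sym2.eq_swap]; exact h.2⟩
  loopless := by
    constructor
    intro p h
    exact h.1 rfl

/-- The prescribed boundary vertex sets for the connectivity condition of groves, for a
given `N`. -/
def BSets (N : ℤ) : Set (Set Z3) :=
  {S | ∃ p q : ℤ, 0 > p ∧ p > q ∧ (p + q = -N - 1 ∨ p + q = -N - 2) ∧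
      (S = {((0 : ℤ), p, q), (p, 0, q)} ∨ S = {(p, q, (0 : ℤ)), ((0 : ℤ), q, p)} ∨
        S = {(q, (0 : ℤ), p), (q, p, (0 : ℤ))})} ∪
  {S | ∃ p : ℤ, (2 * p = -N - 1 ∨ 2 * p = -N - 2) ∧
      S = {((0 : ℤ), p, p), (p, (0 : ℤ), p), (p, p, (0 : ℤ))}} ∪
  {S | ∃ q : ℤ, q ≤ -N - 1 ∧
      (S = {((0 : ℤ), (0 : ℤ), q)} ∨ S = {((0 : ℤ), q, (0 : ℤ))} ∨ S = {(q, (0 : ℤ), (0 : ℤ))})}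

/-- An `ℐ`-grove: a subgraph of `Γ_ℐ` (on the vertex set `ℐ`) containing exactly one diagonal
of each rhombus contained in `ℐ`, eventually all short diagonals, and with the prescribed
connectivity along the boundary. -/
structure Grove (I : Set Z3) where
  edges : Set (Sym2 Z3)
  sub : edges ⊆ allDiag I
  diagA : ∀ p : Z3, rhA p ⊆ I → Xor' (Ea p ∈ edges) (ea p ∈ edges)
  diagB : ∀ p : Z3, rhB p ⊆ I → Xor' (Eb p ∈ edges) (eb p ∈ edges)
  diagC : ∀ p : Z3, rhC p ⊆ I → Xor' (Ec p ∈ edges) (ec p ∈ edges)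
  short : ∃ N₀ : ℤ,
      (∀ p : Z3, rhA p ⊆ I → (∀ v ∈ rhA p, sum3 v < -N₀) → ea p ∈ edges) ∧
      (∀ p : Z3, rhB p ⊆ I → (∀ v ∈ rhB p, sum3 v < -N₀) → eb p ∈ edges) ∧
      (∀ p : Z3, rhC p ⊆ I → (∀ v ∈ rhC p, sum3 v < -N₀) → ec p ∈ edges)
  conn : ∃ N₁ : ℤ, ∀ N : ℤ, N₁ ≤ N →
      (∀ S ∈ BSets N, ∀ u ∈ S, ∀ v ∈ S, (graphOf edges).Reachable u v) ∧
      (∀ v ∈ I, ∃! S : Set Z3, S ∈ BSets N ∧ ∃ u ∈ S, (graphOf edges).Reachable v u)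

/-- The weight `w(G)` of a grove: the product of the conductances of the long diagonals
occurring in `G` (a finite product). -/
def wt (C : Conduct) {I : Set Z3} (G : Grove I) : ℝ :=
  ∏ᶠ p : Z3,
    ((if Ea p ∈ G.edges then C.Ca p else 1) * (if Eb p ∈ G.edges then C.Cb p else 1) *
      (if Ec p ∈ G.edges then C.Cc p else 1))

/-- The partition function `Z_ℐ = ∑_{G ∈ 𝒢(ℐ)} w(G)`. -/
def Zf (C : Conduct) (D : LowerData) : ℝ := ∑' G : Grove D.I, wt C G

/-- The Boltzmann probability measure `ℙ^C_ℐ(G) = w(G)/Z_ℐ`. -/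
def prb (C : Conduct) (D : LowerData) (G : Grove D.I) : ℝ := wt C G / Zf C D

/-- The probability that a given edge occurs in a random `ℐ`-grove. -/
def edgeProb (C : Conduct) (D : LowerData) (e : Sym2 Z3) : ℝ :=
  (∑' G : Grove D.I, if e ∈ G.edges then wt C G else 0) / Zf C D

/-- The degree of a vertex in a grove. -/
def deg {I : Set Z3} (G : Grove I) (v : Z3) : ℕ :=
  {e : Sym2 Z3 | e ∈ G.edges ∧ v ∈ e}.ncard

/-- `m_g(G) = ∏_{(i,j,k) ∈ ℐ} g(i,j,k)^(deg(i,j,k) - 2)` (a finite product). -/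
def mWt (g : Z3 → ℝ) (D : LowerData) (G : Grove D.I) : ℝ :=
  ∏ᶠ p ∈ D.I, g p ^ ((deg G p : ℤ) - 2)

/-- The generalized cube recurrence (the extension equations on `𝒰`). -/
def GenRec (C : Conduct) (D : LowerData) (g : Z3 → ℝ) : Prop :=
  ∀ p ∈ D.U, g p * g (p + (-1, -1, -1)) =
    C.U p * (g (p + (-1, 0, 0)) * g (p + (0, -1, -1))) +
    C.V p * (g (p + (0, -1, 0)) * g (p + (-1, 0, -1))) +
    C.W p * (g (p + (0, 0, -1)) * g (p + (-1, -1, 0)))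

/-! ### Standard initial conditions -/

lemma stdFin (n : ℤ) : {p : Z3 | oct p ∧ ¬ (sum3 p ≤ 1 - n)}.Finite := by
  apply Set.Finite.subset (Set.finite_Icc ((1 - n, 1 - n, 1 - n) : Z3) ((0, 0, 0) : Z3))
  rintro ⟨a, b, c⟩ ⟨hoct, hs⟩
  simp only [oct, sum3, not_le] at hoct hs
  simp only [Set.mem_Icc, Prod.mk_le_mk]
  omega

/-- The standard initial conditions of order `n`, determined by
`ℒ = {(i,j,k) ∈ ℤ³_{≤0} : i+j+k ≤ 1-n}`. -/
def stdD (n : ℤ) : LowerData where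
  L := {p : Z3 | oct p ∧ sum3 p ≤ 1 - n}
  sub := fun _ hp => hp.1
  dc := by
    rintro ⟨a, b, c⟩ hp ⟨x, y, z⟩ hq
    simp only [Set.mem_setOf_eq, oct, sum3, Prod.mk_le_mk] at hp hq ⊢
    omega
  cofin := by
    apply (stdFin n).subset
    rintro p ⟨hoct, hnot⟩
    exact ⟨hoct, fun hle => hnot ⟨hoct, hle⟩⟩

/-! ### Canonical edge probabilities and creation rates -/

/-- The edge probability `p(i,j,k)` of the long diagonal `E_a(i,j,k)`, computed with the
standard initial conditions whose set of initial conditions contains `r_a(i,j,k)` (the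
probability does not depend on this choice). -/
def pA (C : Conduct) (p : Z3) : ℝ := edgeProb C (stdD (1 - sum3 p)) (Ea p)

/-- The edge probability `q(i,j,k)` of the long diagonal `E_b(i,j,k)`. -/
def pB (C : Conduct) (p : Z3) : ℝ := edgeProb C (stdD (1 - sum3 p)) (Eb p)

/-- The edge probability `r(i,j,k)` of the long diagonal `E_c(i,j,k)`. -/
def pC (C : Conduct) (p : Z3) : ℝ := edgeProb C (stdD (1 - sum3 p)) (Ec p)

/-- The creation rate `E(i,j,k) = 1 - p(i,j,k) - q(i,j,k) - r(i,j,k)`. -/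
def crE (C : Conduct) (p : Z3) : ℝ := 1 - pA C p - pB C p - pC C p

/-! ### Generating functions -/

/-- The generating function `∑ p(-i,-j,-k) x^i y^j z^k` for the edge probabilities `p`. -/
def genP (C : Conduct) : MvPowerSeries (Fin 3) ℝ :=
  fun d => pA C (-(d 0 : ℤ), -(d 1 : ℤ), -(d 2 : ℤ))

/-- The generating function `∑ q(-i,-j,-k) x^i y^j z^k` for the edge probabilities `q`. -/
def genQ (C : Conduct) : MvPowerSeries (Fin 3) ℝ :=
  fun d => pB C (-(d 0 : ℤ), -(d 1 : ℤ), -(d 2 : ℤ))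

/-- The generating function `∑ r(-i,-j,-k) x^i y^j z^k` for the edge probabilities `r`. -/
def genR (C : Conduct) : MvPowerSeries (Fin 3) ℝ :=
  fun d => pC C (-(d 0 : ℤ), -(d 1 : ℤ), -(d 2 : ℤ))

/-- The creation rate generating function `F(x,y,z) = ∑ E(-i,-j,-k) x^i y^j z^k`. -/
def genF (C : Conduct) : MvPowerSeries (Fin 3) ℝ :=
  fun d => crE C (-(d 0 : ℤ), -(d 1 : ℤ), -(d 2 : ℤ))

/-- The formal power series `x_i/(1-x_i) = ∑_{k ≥ 1} x_i^k`. -/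
def geomS (i : Fin 3) : MvPowerSeries (Fin 3) ℝ :=
  fun d => if d = Finsupp.single i (d i) ∧ 1 ≤ d i then 1 else 0

/-! ### The statement -/

theorem statement0 (f : Z3 → ℝ) (hpos : PosOn f) (hrec : CubeRec f) :
    ∀ p : Z3, oct p →
      (Cf f).Ca p * ((Cf f).Ca (p + (-1, 0, 0)))⁻¹ = (Cf f).S p ∧
      (Cf f).Cb p * ((Cf f).Cb (p + (0, -1, 0)))⁻¹ = (Cf f).S p ∧
      (Cf f).Cc p * ((Cf f).Cc (p + (0, 0, -1)))⁻¹ = (Cf f).S p := by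
  intro p hp
  obtain ⟨i, j, k⟩ := p
  obtain ⟨hi, hj, hk⟩ := hp
  have hi' : i ≤ 0 := hi
  have hj' : j ≤ 0 := hj
  have hk' : k ≤ 0 := hk
  have P : ∀ x y z : ℤ, x ≤ 0 → y ≤ 0 → z ≤ 0 → 0 < f (i + x, j + y, k + z) :=
    fun x y z hx hy hz => hpos _ ⟨by simp only []; omega, by simp only []; omega,
      by simp only []; omega⟩
  have h0 : (0:ℝ) < f (i, j, k) := hpos _ ⟨hi, hj, hk⟩
  have h1 := P (-1) 0 0 (by omega) le_rfl le_rfl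
  have h2 := P 0 (-1) 0 le_rfl (by omega) le_rfl
  have h3 := P 0 0 (-1) le_rfl le_rfl (by omega)
  have h12 := P (-1) (-1) 0 (by omega) (by omega) le_rfl
  have h13 := P (-1) 0 (-1) (by omega) le_rfl (by omega)
  have h23 := P 0 (-1) (-1) le_rfl (by omega) (by omega)
  have h123 := P (-1) (-1) (-1) (by omega) (by omega) (by omega)
  have hr := hrec (i, j, k) ⟨hi, hj, hk⟩
  simp only [Prod.mk_add_mk, add_zero] at h1 h2 h3 h12 h13 h23 h123 hr
  simp only [Cf, Conduct.S, Prod.mk_add_mk, add_zero]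
  have e1 : i + -1 + 0 = i + -1 := by ring
  refine ⟨?_, ?_, ?_⟩ <;>
  · field_simp
    simp only [← sub_eq_add_neg] at hr ⊢
    linear_combination hr


end
end

section
/- For every positive Y−Δ consistent conductance function C on ℤ³≤0 there exists a function f : ℤ³≤0 → ℝ>0 satisfying the cube recurrence such that C^f = C, i.e. C^f_q(i,j,k) = C_q(i,j,k) for all q ∈ {a,b,c} and all (i,j,k) ∈ ℤ³≤0. In other words, the map f ↦ C^f from positive solutions of the cube recurrence to positive Y−Δ consistent conductance functions is surjective. -/
open scoped BigOperators
open scoped Classical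

noncomputable section

/-! ### The statement -/

section CubeAux

lemma pt_add' (a b c x y z : ℤ) : ((a, b, c) : Z3) + (x, y, z) = (a + x, b + y, c + z) := rfl

lemma oct_mk {a b c : ℤ} (h1 : a ≤ 0) (h2 : b ≤ 0) (h3 : c ≤ 0) : oct (a, b, c) := ⟨h1, h2, h3⟩

lemma icc_shift (h : ℤ → ℝ) {j : ℤ} (hj : j ≤ 0) :
    ∏ x ∈ Finset.Icc j 0, h x = h j * ∏ x ∈ Finset.Icc (j + 1) 0, h x := by
  rw [show Finset.Icc j 0 = insert j (Finset.Icc (j + 1) 0) by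
      ext x; simp only [Finset.mem_Icc, Finset.mem_insert]; omega,
    Finset.prod_insert (by simp only [Finset.mem_Icc]; omega)]

def PPa (C : Conduct) (j k : ℤ) : ℝ :=
  ∏ y ∈ Finset.Icc (j + 1) 0, ∏ z ∈ Finset.Icc (k + 1) 0, C.Ca (0, y, z)

def PPb (C : Conduct) (i k : ℤ) : ℝ :=
  ∏ x ∈ Finset.Icc (i + 1) 0, ∏ z ∈ Finset.Icc (k + 1) 0, C.Cb (x, 0, z)

def PPc (C : Conduct) (i j : ℤ) : ℝ :=
  ∏ x ∈ Finset.Icc (i + 1) 0, ∏ y ∈ Finset.Icc (j + 1) 0, C.Cc (x, y, 0)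

def TTs (C : Conduct) (i j k : ℤ) : ℝ :=
  ∏ x ∈ Finset.Icc (i + 1) 0, ∏ y ∈ Finset.Icc (j + 1) 0, ∏ z ∈ Finset.Icc (k + 1) 0, C.S (x, y, z)

def fC (C : Conduct) (p : Z3) : ℝ :=
  (PPa C p.2.1 p.2.2)⁻¹ * (PPb C p.1 p.2.2)⁻¹ * (PPc C p.1 p.2.1)⁻¹ * TTs C p.1 p.2.1 p.2.2

variable {C : Conduct}

lemma S_pos (hpos : C.Pos) {p : Z3} (hp : oct p) : 0 < C.S p := by
  obtain ⟨h1, h2, h3⟩ := hpos p hp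
  unfold Conduct.S
  positivity

lemma PPa_pos (hpos : C.Pos) (j k : ℤ) : 0 < PPa C j k :=
  Finset.prod_pos fun y hy => Finset.prod_pos fun z hz =>
    (hpos (0, y, z) (oct_mk le_rfl (Finset.mem_Icc.mp hy).2 (Finset.mem_Icc.mp hz).2)).1

lemma PPb_pos (hpos : C.Pos) (i k : ℤ) : 0 < PPb C i k :=
  Finset.prod_pos fun x hx => Finset.prod_pos fun z hz =>
    (hpos (x, 0, z) (oct_mk (Finset.mem_Icc.mp hx).2 le_rfl (Finset.mem_Icc.mp hz).2)).2.1

lemma PPc_pos (hpos : C.Pos) (i j : ℤ) : 0 < PPc C i j :=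
  Finset.prod_pos fun x hx => Finset.prod_pos fun y hy =>
    (hpos (x, y, 0) (oct_mk (Finset.mem_Icc.mp hx).2 (Finset.mem_Icc.mp hy).2 le_rfl)).2.2

lemma TTs_pos (hpos : C.Pos) (i j k : ℤ) : 0 < TTs C i j k :=
  Finset.prod_pos fun x hx => Finset.prod_pos fun y hy => Finset.prod_pos fun z hz =>
    S_pos hpos (oct_mk (Finset.mem_Icc.mp hx).2 (Finset.mem_Icc.mp hy).2 (Finset.mem_Icc.mp hz).2)

lemma fC_pos (hpos : C.Pos) (p : Z3) : 0 < fC C p := by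
  unfold fC
  exact mul_pos (mul_pos (mul_pos (inv_pos.2 (PPa_pos hpos _ _)) (inv_pos.2 (PPb_pos hpos _ _)))
    (inv_pos.2 (PPc_pos hpos _ _))) (TTs_pos hpos _ _ _)

/-! Shift lemmas. -/

lemma PPa_left (j k : ℤ) (hj : j ≤ 0) :
    PPa C (j - 1) k = (∏ z ∈ Finset.Icc (k + 1) 0, C.Ca (0, j, z)) * PPa C j k := by
  unfold PPa
  rw [show j - 1 + 1 = j by ring]
  exact icc_shift (fun y => ∏ z ∈ Finset.Icc (k + 1) 0, C.Ca (0, y, z)) hj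

lemma PPa_leftdown (j k : ℤ) (hj : j ≤ 0) (hk : k ≤ 0) :
    PPa C (j - 1) (k - 1) =
      (C.Ca (0, j, k) * ∏ z ∈ Finset.Icc (k + 1) 0, C.Ca (0, j, z)) * PPa C j (k - 1) := by
  unfold PPa
  rw [show j - 1 + 1 = j by ring, show k - 1 + 1 = k by ring,
    icc_shift (fun y => ∏ z ∈ Finset.Icc k 0, C.Ca (0, y, z)) hj,
    icc_shift (fun z => C.Ca (0, j, z)) hk]

lemma PPb_left (i k : ℤ) (hi : i ≤ 0) :
    PPb C (i - 1) k = (∏ z ∈ Finset.Icc (k + 1) 0, C.Cb (i, 0, z)) * PPb C i k := by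
  unfold PPb
  rw [show i - 1 + 1 = i by ring]
  exact icc_shift (fun x => ∏ z ∈ Finset.Icc (k + 1) 0, C.Cb (x, 0, z)) hi

lemma PPb_leftdown (i k : ℤ) (hi : i ≤ 0) (hk : k ≤ 0) :
    PPb C (i - 1) (k - 1) =
      (C.Cb (i, 0, k) * ∏ z ∈ Finset.Icc (k + 1) 0, C.Cb (i, 0, z)) * PPb C i (k - 1) := by
  unfold PPb
  rw [show i - 1 + 1 = i by ring, show k - 1 + 1 = k by ring,
    icc_shift (fun x => ∏ z ∈ Finset.Icc k 0, C.Cb (x, 0, z)) hi,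
    icc_shift (fun z => C.Cb (i, 0, z)) hk]

lemma PPc_left (i j : ℤ) (hi : i ≤ 0) :
    PPc C (i - 1) j = (∏ y ∈ Finset.Icc (j + 1) 0, C.Cc (i, y, 0)) * PPc C i j := by
  unfold PPc
  rw [show i - 1 + 1 = i by ring]
  exact icc_shift (fun x => ∏ y ∈ Finset.Icc (j + 1) 0, C.Cc (x, y, 0)) hi

lemma PPc_leftdown (i j : ℤ) (hi : i ≤ 0) (hj : j ≤ 0) :
    PPc C (i - 1) (j - 1) =
      (C.Cc (i, j, 0) * ∏ y ∈ Finset.Icc (j + 1) 0, C.Cc (i, y, 0)) * PPc C i (j - 1) := by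
  unfold PPc
  rw [show i - 1 + 1 = i by ring, show j - 1 + 1 = j by ring,
    icc_shift (fun x => ∏ y ∈ Finset.Icc j 0, C.Cc (x, y, 0)) hi,
    icc_shift (fun y => C.Cc (i, y, 0)) hj]

lemma TTs_i (i j k : ℤ) (hi : i ≤ 0) :
    TTs C (i - 1) j k =
      (∏ y ∈ Finset.Icc (j + 1) 0, ∏ z ∈ Finset.Icc (k + 1) 0, C.S (i, y, z)) * TTs C i j k := by
  unfold TTs
  rw [show i - 1 + 1 = i by ring]
  exact icc_shift
    (fun x => ∏ y ∈ Finset.Icc (j + 1) 0, ∏ z ∈ Finset.Icc (k + 1) 0, C.S (x, y, z)) hi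

lemma TTs_j (i j k : ℤ) (hj : j ≤ 0) :
    TTs C i (j - 1) k =
      (∏ x ∈ Finset.Icc (i + 1) 0, ∏ z ∈ Finset.Icc (k + 1) 0, C.S (x, j, z)) * TTs C i j k := by
  unfold TTs
  rw [show j - 1 + 1 = j by ring, ← Finset.prod_mul_distrib]
  exact Finset.prod_congr rfl fun x _ =>
    icc_shift (fun y => ∏ z ∈ Finset.Icc (k + 1) 0, C.S (x, y, z)) hj

lemma TTs_jk (i j k : ℤ) (hj : j ≤ 0) (hk : k ≤ 0) :
    TTs C i (j - 1) (k - 1) =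
      ((∏ x ∈ Finset.Icc (i + 1) 0, C.S (x, j, k)) *
        ∏ x ∈ Finset.Icc (i + 1) 0, ∏ z ∈ Finset.Icc (k + 1) 0, C.S (x, j, z)) *
        TTs C i j (k - 1) := by
  unfold TTs
  rw [show j - 1 + 1 = j by ring, show k - 1 + 1 = k by ring, mul_assoc,
    ← Finset.prod_mul_distrib, ← Finset.prod_mul_distrib]
  refine Finset.prod_congr rfl fun x _ => ?_
  rw [icc_shift (fun y => ∏ z ∈ Finset.Icc k 0, C.S (x, y, z)) hj,
    icc_shift (fun z => C.S (x, j, z)) hk]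
  ring

lemma TTs_ik (i j k : ℤ) (hi : i ≤ 0) (hk : k ≤ 0) :
    TTs C (i - 1) j (k - 1) =
      ((∏ y ∈ Finset.Icc (j + 1) 0, C.S (i, y, k)) *
        ∏ y ∈ Finset.Icc (j + 1) 0, ∏ z ∈ Finset.Icc (k + 1) 0, C.S (i, y, z)) *
        TTs C i j (k - 1) := by
  unfold TTs
  rw [show i - 1 + 1 = i by ring, show k - 1 + 1 = k by ring,
    icc_shift (fun x => ∏ y ∈ Finset.Icc (j + 1) 0, ∏ z ∈ Finset.Icc k 0, C.S (x, y, z)) hi]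
  congr 1
  rw [← Finset.prod_mul_distrib]
  exact Finset.prod_congr rfl fun y _ => icc_shift (fun z => C.S (i, y, z)) hk

lemma TTs_ij (i j k : ℤ) (hi : i ≤ 0) (hj : j ≤ 0) :
    TTs C (i - 1) (j - 1) k =
      ((∏ z ∈ Finset.Icc (k + 1) 0, C.S (i, j, z)) *
        ∏ y ∈ Finset.Icc (j + 1) 0, ∏ z ∈ Finset.Icc (k + 1) 0, C.S (i, y, z)) *
        TTs C i (j - 1) k := by
  unfold TTs
  rw [show i - 1 + 1 = i by ring, show j - 1 + 1 = j by ring,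
    icc_shift (fun x => ∏ y ∈ Finset.Icc j 0, ∏ z ∈ Finset.Icc (k + 1) 0, C.S (x, y, z)) hi,
    icc_shift (fun y => ∏ z ∈ Finset.Icc (k + 1) 0, C.S (i, y, z)) hj]

/-! Telescoping from Y-Δ consistency. -/

lemma teleA (hpos : C.Pos) (hyd : C.YD) {j k : ℤ} (hj : j ≤ 0) (hk : k ≤ 0) :
    ∀ i : ℤ, i ≤ 0 → C.Ca (0, j, k) = C.Ca (i, j, k) * ∏ x ∈ Finset.Icc (i + 1) 0, C.S (x, j, k) := by
  intro i hi
  refine Int.le_induction_down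
    (motive := fun i _ => C.Ca (0, j, k) = C.Ca (i, j, k) * ∏ x ∈ Finset.Icc (i + 1) 0, C.S (x, j, k))
    ?_ ?_ i hi
  · show C.Ca (0, j, k) = C.Ca (0, j, k) * ∏ x ∈ Finset.Icc ((0 : ℤ) + 1) 0, C.S (x, j, k)
    rw [show Finset.Icc (0 + 1 : ℤ) 0 = ∅ from Finset.Icc_eq_empty (by omega),
      Finset.prod_empty, mul_one]
  · intro n hn ih
    show C.Ca (0, j, k) = C.Ca (n - 1, j, k) * ∏ x ∈ Finset.Icc (n - 1 + 1) 0, C.S (x, j, k)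
    replace ih : C.Ca (0, j, k) = C.Ca (n, j, k) * ∏ x ∈ Finset.Icc (n + 1) 0, C.S (x, j, k) := ih
    have hstep : C.Ca (n, j, k) = C.S (n, j, k) * C.Ca (n - 1, j, k) := by
      have h := (hyd (n, j, k) (oct_mk hn hj hk)).1
      rw [show ((n, j, k) : Z3) + (-1, 0, 0) = (n - 1, j, k) by
          rw [pt_add']; simp only [Prod.mk.injEq]; omega,
        ← div_eq_mul_inv, div_eq_iff (ne_of_gt (hpos (n - 1, j, k) (oct_mk (by omega) hj hk)).1)] at h
      exact h
    rw [show n - 1 + 1 = n by ring, icc_shift (fun x => C.S (x, j, k)) hn, ih, hstep]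
    ring

lemma teleB (hpos : C.Pos) (hyd : C.YD) {i k : ℤ} (hi : i ≤ 0) (hk : k ≤ 0) :
    ∀ j : ℤ, j ≤ 0 → C.Cb (i, 0, k) = C.Cb (i, j, k) * ∏ y ∈ Finset.Icc (j + 1) 0, C.S (i, y, k) := by
  intro j hj
  refine Int.le_induction_down
    (motive := fun j _ => C.Cb (i, 0, k) = C.Cb (i, j, k) * ∏ y ∈ Finset.Icc (j + 1) 0, C.S (i, y, k))
    ?_ ?_ j hj
  · show C.Cb (i, 0, k) = C.Cb (i, 0, k) * ∏ y ∈ Finset.Icc ((0 : ℤ) + 1) 0, C.S (i, y, k)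
    rw [show Finset.Icc (0 + 1 : ℤ) 0 = ∅ from Finset.Icc_eq_empty (by omega),
      Finset.prod_empty, mul_one]
  · intro n hn ih
    show C.Cb (i, 0, k) = C.Cb (i, n - 1, k) * ∏ y ∈ Finset.Icc (n - 1 + 1) 0, C.S (i, y, k)
    replace ih : C.Cb (i, 0, k) = C.Cb (i, n, k) * ∏ y ∈ Finset.Icc (n + 1) 0, C.S (i, y, k) := ih
    have hstep : C.Cb (i, n, k) = C.S (i, n, k) * C.Cb (i, n - 1, k) := by
      have h := (hyd (i, n, k) (oct_mk hi hn hk)).2.1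
      rw [show ((i, n, k) : Z3) + (0, -1, 0) = (i, n - 1, k) by
          rw [pt_add']; simp only [Prod.mk.injEq]; omega,
        ← div_eq_mul_inv, div_eq_iff (ne_of_gt (hpos (i, n - 1, k) (oct_mk hi (by omega) hk)).2.1)] at h
      exact h
    rw [show n - 1 + 1 = n by ring, icc_shift (fun y => C.S (i, y, k)) hn, ih, hstep]
    ring

lemma teleC (hpos : C.Pos) (hyd : C.YD) {i j : ℤ} (hi : i ≤ 0) (hj : j ≤ 0) :
    ∀ k : ℤ, k ≤ 0 → C.Cc (i, j, 0) = C.Cc (i, j, k) * ∏ z ∈ Finset.Icc (k + 1) 0, C.S (i, j, z) := by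
  intro k hk
  refine Int.le_induction_down
    (motive := fun k _ => C.Cc (i, j, 0) = C.Cc (i, j, k) * ∏ z ∈ Finset.Icc (k + 1) 0, C.S (i, j, z))
    ?_ ?_ k hk
  · show C.Cc (i, j, 0) = C.Cc (i, j, 0) * ∏ z ∈ Finset.Icc ((0 : ℤ) + 1) 0, C.S (i, j, z)
    rw [show Finset.Icc (0 + 1 : ℤ) 0 = ∅ from Finset.Icc_eq_empty (by omega),
      Finset.prod_empty, mul_one]
  · intro n hn ih
    show C.Cc (i, j, 0) = C.Cc (i, j, n - 1) * ∏ z ∈ Finset.Icc (n - 1 + 1) 0, C.S (i, j, z)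
    replace ih : C.Cc (i, j, 0) = C.Cc (i, j, n) * ∏ z ∈ Finset.Icc (n + 1) 0, C.S (i, j, z) := ih
    have hstep : C.Cc (i, j, n) = C.S (i, j, n) * C.Cc (i, j, n - 1) := by
      have h := (hyd (i, j, n) (oct_mk hi hj hn)).2.2
      rw [show ((i, j, n) : Z3) + (0, 0, -1) = (i, j, n - 1) by
          rw [pt_add']; simp only [Prod.mk.injEq]; omega,
        ← div_eq_mul_inv, div_eq_iff (ne_of_gt (hpos (i, j, n - 1) (oct_mk hi hj (by omega))).2.2)] at h
      exact h
    rw [show n - 1 + 1 = n by ring, icc_shift (fun z => C.S (i, j, z)) hn, ih, hstep]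
    ring

end CubeAux

section CubeMatch

variable {C : Conduct}

set_option maxHeartbeats 3200000 in
lemma match_a (hpos : C.Pos) (hyd : C.YD) {p : Z3} (hp : oct p) :
    (Cf (fC C)).Ca p = C.Ca p := by
  obtain ⟨i, j, k⟩ := p
  have hi : i ≤ 0 := hp.1
  have hj : j ≤ 0 := hp.2.1
  have hk : k ≤ 0 := hp.2.2
  show fC C ((i, j, k) + (0, -1, 0)) * fC C ((i, j, k) + (0, 0, -1)) /
      (fC C (i, j, k) * fC C ((i, j, k) + (0, -1, -1))) = C.Ca (i, j, k)
  rw [show ((i, j, k) : Z3) + (0, -1, 0) = (i, j - 1, k) by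
      rw [pt_add']; simp only [Prod.mk.injEq]; omega,
    show ((i, j, k) : Z3) + (0, 0, -1) = (i, j, k - 1) by
      rw [pt_add']; simp only [Prod.mk.injEq]; omega,
    show ((i, j, k) : Z3) + (0, -1, -1) = (i, j - 1, k - 1) by
      rw [pt_add']; simp only [Prod.mk.injEq]; omega]
  show (PPa C (j - 1) k)⁻¹ * (PPb C i k)⁻¹ * (PPc C i (j - 1))⁻¹ * TTs C i (j - 1) k *
      ((PPa C j (k - 1))⁻¹ * (PPb C i (k - 1))⁻¹ * (PPc C i j)⁻¹ * TTs C i j (k - 1)) /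
      ((PPa C j k)⁻¹ * (PPb C i k)⁻¹ * (PPc C i j)⁻¹ * TTs C i j k *
        ((PPa C (j - 1) (k - 1))⁻¹ * (PPb C i (k - 1))⁻¹ * (PPc C i (j - 1))⁻¹ *
          TTs C i (j - 1) (k - 1))) = C.Ca (i, j, k)
  have hcol : (0 : ℝ) < ∏ z ∈ Finset.Icc (k + 1) 0, C.Ca (0, j, z) :=
    Finset.prod_pos fun z hz => (hpos (0, j, z) (oct_mk le_rfl hj (Finset.mem_Icc.mp hz).2)).1
  have hps : (0 : ℝ) < ∏ x ∈ Finset.Icc (i + 1) 0, C.S (x, j, k) :=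
    Finset.prod_pos fun x hx => S_pos hpos (oct_mk (Finset.mem_Icc.mp hx).2 hj hk)
  have hds : (0 : ℝ) < ∏ x ∈ Finset.Icc (i + 1) 0, ∏ z ∈ Finset.Icc (k + 1) 0, C.S (x, j, z) :=
    Finset.prod_pos fun x hx => Finset.prod_pos fun z hz =>
      S_pos hpos (oct_mk (Finset.mem_Icc.mp hx).2 hj (Finset.mem_Icc.mp hz).2)
  have h1 := PPa_pos hpos j k
  have h2 := PPa_pos hpos j (k - 1)
  have h3 := PPb_pos hpos i k
  have h4 := PPb_pos hpos i (k - 1)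
  have h5 := PPc_pos hpos i j
  have h6 := PPc_pos hpos i (j - 1)
  have h7 := TTs_pos hpos i j k
  have h8 := TTs_pos hpos i j (k - 1)
  have hca := (hpos (i, j, k) (oct_mk hi hj hk)).1
  rw [PPa_left j k hj, PPa_leftdown j k hj hk, TTs_j i j k hj, TTs_jk i j k hj hk,
    teleA hpos hyd hj hk i hi]
  field_simp

set_option maxHeartbeats 3200000 in
lemma match_b (hpos : C.Pos) (hyd : C.YD) {p : Z3} (hp : oct p) :
    (Cf (fC C)).Cb p = C.Cb p := by
  obtain ⟨i, j, k⟩ := p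
  have hi : i ≤ 0 := hp.1
  have hj : j ≤ 0 := hp.2.1
  have hk : k ≤ 0 := hp.2.2
  show fC C ((i, j, k) + (-1, 0, 0)) * fC C ((i, j, k) + (0, 0, -1)) /
      (fC C (i, j, k) * fC C ((i, j, k) + (-1, 0, -1))) = C.Cb (i, j, k)
  rw [show ((i, j, k) : Z3) + (-1, 0, 0) = (i - 1, j, k) by
      rw [pt_add']; simp only [Prod.mk.injEq]; omega,
    show ((i, j, k) : Z3) + (0, 0, -1) = (i, j, k - 1) by
      rw [pt_add']; simp only [Prod.mk.injEq]; omega,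
    show ((i, j, k) : Z3) + (-1, 0, -1) = (i - 1, j, k - 1) by
      rw [pt_add']; simp only [Prod.mk.injEq]; omega]
  show (PPa C j k)⁻¹ * (PPb C (i - 1) k)⁻¹ * (PPc C (i - 1) j)⁻¹ * TTs C (i - 1) j k *
      ((PPa C j (k - 1))⁻¹ * (PPb C i (k - 1))⁻¹ * (PPc C i j)⁻¹ * TTs C i j (k - 1)) /
      ((PPa C j k)⁻¹ * (PPb C i k)⁻¹ * (PPc C i j)⁻¹ * TTs C i j k *
        ((PPa C j (k - 1))⁻¹ * (PPb C (i - 1) (k - 1))⁻¹ * (PPc C (i - 1) j)⁻¹ *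
          TTs C (i - 1) j (k - 1))) = C.Cb (i, j, k)
  have hcol : (0 : ℝ) < ∏ z ∈ Finset.Icc (k + 1) 0, C.Cb (i, 0, z) :=
    Finset.prod_pos fun z hz => (hpos (i, 0, z) (oct_mk hi le_rfl (Finset.mem_Icc.mp hz).2)).2.1
  have hps : (0 : ℝ) < ∏ y ∈ Finset.Icc (j + 1) 0, C.S (i, y, k) :=
    Finset.prod_pos fun y hy => S_pos hpos (oct_mk hi (Finset.mem_Icc.mp hy).2 hk)
  have hds : (0 : ℝ) < ∏ y ∈ Finset.Icc (j + 1) 0, ∏ z ∈ Finset.Icc (k + 1) 0, C.S (i, y, z) :=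
    Finset.prod_pos fun y hy => Finset.prod_pos fun z hz =>
      S_pos hpos (oct_mk hi (Finset.mem_Icc.mp hy).2 (Finset.mem_Icc.mp hz).2)
  have h1 := PPa_pos hpos j k
  have h2 := PPa_pos hpos j (k - 1)
  have h3 := PPb_pos hpos i k
  have h4 := PPb_pos hpos i (k - 1)
  have h5 := PPc_pos hpos i j
  have h6 := PPc_pos hpos (i - 1) j
  have h7 := TTs_pos hpos i j k
  have h8 := TTs_pos hpos i j (k - 1)
  have hcb := (hpos (i, j, k) (oct_mk hi hj hk)).2.1
  rw [PPb_left i k hi, PPb_leftdown i k hi hk, TTs_i i j k hi, TTs_ik i j k hi hk,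
    teleB hpos hyd hi hk j hj]
  field_simp

set_option maxHeartbeats 3200000 in
lemma match_c (hpos : C.Pos) (hyd : C.YD) {p : Z3} (hp : oct p) :
    (Cf (fC C)).Cc p = C.Cc p := by
  obtain ⟨i, j, k⟩ := p
  have hi : i ≤ 0 := hp.1
  have hj : j ≤ 0 := hp.2.1
  have hk : k ≤ 0 := hp.2.2
  show fC C ((i, j, k) + (-1, 0, 0)) * fC C ((i, j, k) + (0, -1, 0)) /
      (fC C (i, j, k) * fC C ((i, j, k) + (-1, -1, 0))) = C.Cc (i, j, k)
  rw [show ((i, j, k) : Z3) + (-1, 0, 0) = (i - 1, j, k) by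
      rw [pt_add']; simp only [Prod.mk.injEq]; omega,
    show ((i, j, k) : Z3) + (0, -1, 0) = (i, j - 1, k) by
      rw [pt_add']; simp only [Prod.mk.injEq]; omega,
    show ((i, j, k) : Z3) + (-1, -1, 0) = (i - 1, j - 1, k) by
      rw [pt_add']; simp only [Prod.mk.injEq]; omega]
  show (PPa C j k)⁻¹ * (PPb C (i - 1) k)⁻¹ * (PPc C (i - 1) j)⁻¹ * TTs C (i - 1) j k *
      ((PPa C (j - 1) k)⁻¹ * (PPb C i k)⁻¹ * (PPc C i (j - 1))⁻¹ * TTs C i (j - 1) k) /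
      ((PPa C j k)⁻¹ * (PPb C i k)⁻¹ * (PPc C i j)⁻¹ * TTs C i j k *
        ((PPa C (j - 1) k)⁻¹ * (PPb C (i - 1) k)⁻¹ * (PPc C (i - 1) (j - 1))⁻¹ *
          TTs C (i - 1) (j - 1) k)) = C.Cc (i, j, k)
  have hcol : (0 : ℝ) < ∏ y ∈ Finset.Icc (j + 1) 0, C.Cc (i, y, 0) :=
    Finset.prod_pos fun y hy => (hpos (i, y, 0) (oct_mk hi (Finset.mem_Icc.mp hy).2 le_rfl)).2.2
  have hps : (0 : ℝ) < ∏ z ∈ Finset.Icc (k + 1) 0, C.S (i, j, z) :=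
    Finset.prod_pos fun z hz => S_pos hpos (oct_mk hi hj (Finset.mem_Icc.mp hz).2)
  have hds : (0 : ℝ) < ∏ y ∈ Finset.Icc (j + 1) 0, ∏ z ∈ Finset.Icc (k + 1) 0, C.S (i, y, z) :=
    Finset.prod_pos fun y hy => Finset.prod_pos fun z hz =>
      S_pos hpos (oct_mk hi (Finset.mem_Icc.mp hy).2 (Finset.mem_Icc.mp hz).2)
  have h1 := PPa_pos hpos j k
  have h2 := PPa_pos hpos (j - 1) k
  have h3 := PPb_pos hpos i k
  have h4 := PPb_pos hpos (i - 1) k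
  have h5 := PPc_pos hpos i j
  have h6 := PPc_pos hpos i (j - 1)
  have h7 := TTs_pos hpos i j k
  have h8 := TTs_pos hpos i (j - 1) k
  have hcc := (hpos (i, j, k) (oct_mk hi hj hk)).2.2
  rw [PPc_left i j hi, PPc_leftdown i j hi hj, TTs_i i j k hi, TTs_ij i j k hi hj,
    teleC hpos hyd hi hj k hk]
  field_simp

end CubeMatch

section CubeMain

variable {C : Conduct}

set_option maxHeartbeats 3200000 in
lemma cube_rec (hpos : C.Pos) (hyd : C.YD) : CubeRec (fC C) := by
  intro p hp
  obtain ⟨i, j, k⟩ := p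
  have hi : i ≤ 0 := hp.1
  have hj : j ≤ 0 := hp.2.1
  have hk : k ≤ 0 := hp.2.2
  rw [show ((i, j, k) : Z3) + (-1, -1, -1) = (i - 1, j - 1, k - 1) by
      rw [pt_add']; simp only [Prod.mk.injEq]; omega,
    show ((i, j, k) : Z3) + (-1, 0, 0) = (i - 1, j, k) by
      rw [pt_add']; simp only [Prod.mk.injEq]; omega,
    show ((i, j, k) : Z3) + (0, -1, -1) = (i, j - 1, k - 1) by
      rw [pt_add']; simp only [Prod.mk.injEq]; omega,
    show ((i, j, k) : Z3) + (0, -1, 0) = (i, j - 1, k) by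
      rw [pt_add']; simp only [Prod.mk.injEq]; omega,
    show ((i, j, k) : Z3) + (-1, 0, -1) = (i - 1, j, k - 1) by
      rw [pt_add']; simp only [Prod.mk.injEq]; omega,
    show ((i, j, k) : Z3) + (0, 0, -1) = (i, j, k - 1) by
      rw [pt_add']; simp only [Prod.mk.injEq]; omega,
    show ((i, j, k) : Z3) + (-1, -1, 0) = (i - 1, j - 1, k) by
      rw [pt_add']; simp only [Prod.mk.injEq]; omega]
  -- the eight values of f
  have hu0 := fC_pos hpos (i, j, k)
  have hu1 := fC_pos hpos (i - 1, j, k)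
  have hu2 := fC_pos hpos (i, j - 1, k)
  have hu3 := fC_pos hpos (i, j, k - 1)
  have hu12 := fC_pos hpos (i - 1, j - 1, k)
  have hu13 := fC_pos hpos (i - 1, j, k - 1)
  have hu23 := fC_pos hpos (i, j - 1, k - 1)
  have huv := fC_pos hpos (i - 1, j - 1, k - 1)
  -- conductance equalities, in explicit form
  have e1 : fC C (i, j - 1, k) * fC C (i, j, k - 1) /
      (fC C (i, j, k) * fC C (i, j - 1, k - 1)) = C.Ca (i, j, k) := by
    have h := match_a hpos hyd (p := (i, j, k)) (oct_mk hi hj hk)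
    rwa [show (Cf (fC C)).Ca (i, j, k) = fC C ((i, j, k) + (0, -1, 0)) *
        fC C ((i, j, k) + (0, 0, -1)) / (fC C (i, j, k) * fC C ((i, j, k) + (0, -1, -1))) from rfl,
      show ((i, j, k) : Z3) + (0, -1, 0) = (i, j - 1, k) by
        rw [pt_add']; simp only [Prod.mk.injEq]; omega,
      show ((i, j, k) : Z3) + (0, 0, -1) = (i, j, k - 1) by
        rw [pt_add']; simp only [Prod.mk.injEq]; omega,
      show ((i, j, k) : Z3) + (0, -1, -1) = (i, j - 1, k - 1) by
        rw [pt_add']; simp only [Prod.mk.injEq]; omega] at h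
  have e2 : fC C (i - 1, j, k) * fC C (i, j, k - 1) /
      (fC C (i, j, k) * fC C (i - 1, j, k - 1)) = C.Cb (i, j, k) := by
    have h := match_b hpos hyd (p := (i, j, k)) (oct_mk hi hj hk)
    rwa [show (Cf (fC C)).Cb (i, j, k) = fC C ((i, j, k) + (-1, 0, 0)) *
        fC C ((i, j, k) + (0, 0, -1)) / (fC C (i, j, k) * fC C ((i, j, k) + (-1, 0, -1))) from rfl,
      show ((i, j, k) : Z3) + (-1, 0, 0) = (i - 1, j, k) by
        rw [pt_add']; simp only [Prod.mk.injEq]; omega,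
      show ((i, j, k) : Z3) + (0, 0, -1) = (i, j, k - 1) by
        rw [pt_add']; simp only [Prod.mk.injEq]; omega,
      show ((i, j, k) : Z3) + (-1, 0, -1) = (i - 1, j, k - 1) by
        rw [pt_add']; simp only [Prod.mk.injEq]; omega] at h
  have e3 : fC C (i - 1, j, k) * fC C (i, j - 1, k) /
      (fC C (i, j, k) * fC C (i - 1, j - 1, k)) = C.Cc (i, j, k) := by
    have h := match_c hpos hyd (p := (i, j, k)) (oct_mk hi hj hk)
    rwa [show (Cf (fC C)).Cc (i, j, k) = fC C ((i, j, k) + (-1, 0, 0)) *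
        fC C ((i, j, k) + (0, -1, 0)) / (fC C (i, j, k) * fC C ((i, j, k) + (-1, -1, 0))) from rfl,
      show ((i, j, k) : Z3) + (-1, 0, 0) = (i - 1, j, k) by
        rw [pt_add']; simp only [Prod.mk.injEq]; omega,
      show ((i, j, k) : Z3) + (0, -1, 0) = (i, j - 1, k) by
        rw [pt_add']; simp only [Prod.mk.injEq]; omega,
      show ((i, j, k) : Z3) + (-1, -1, 0) = (i - 1, j - 1, k) by
        rw [pt_add']; simp only [Prod.mk.injEq]; omega] at h
  have e4 : fC C (i - 1, j - 1, k) * fC C (i - 1, j, k - 1) /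
      (fC C (i - 1, j, k) * fC C (i - 1, j - 1, k - 1)) = C.Ca (i - 1, j, k) := by
    have h := match_a hpos hyd (p := (i - 1, j, k)) (oct_mk (by omega) hj hk)
    rwa [show (Cf (fC C)).Ca (i - 1, j, k) = fC C ((i - 1, j, k) + (0, -1, 0)) *
        fC C ((i - 1, j, k) + (0, 0, -1)) /
        (fC C (i - 1, j, k) * fC C ((i - 1, j, k) + (0, -1, -1))) from rfl,
      show ((i - 1, j, k) : Z3) + (0, -1, 0) = (i - 1, j - 1, k) by
        rw [pt_add']; simp only [Prod.mk.injEq]; omega,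
      show ((i - 1, j, k) : Z3) + (0, 0, -1) = (i - 1, j, k - 1) by
        rw [pt_add']; simp only [Prod.mk.injEq]; omega,
      show ((i - 1, j, k) : Z3) + (0, -1, -1) = (i - 1, j - 1, k - 1) by
        rw [pt_add']; simp only [Prod.mk.injEq]; omega] at h
  have e5 : fC C (i - 1, j - 1, k) * fC C (i, j - 1, k - 1) /
      (fC C (i, j - 1, k) * fC C (i - 1, j - 1, k - 1)) = C.Cb (i, j - 1, k) := by
    have h := match_b hpos hyd (p := (i, j - 1, k)) (oct_mk hi (by omega) hk)
    rwa [show (Cf (fC C)).Cb (i, j - 1, k) = fC C ((i, j - 1, k) + (-1, 0, 0)) *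
        fC C ((i, j - 1, k) + (0, 0, -1)) /
        (fC C (i, j - 1, k) * fC C ((i, j - 1, k) + (-1, 0, -1))) from rfl,
      show ((i, j - 1, k) : Z3) + (-1, 0, 0) = (i - 1, j - 1, k) by
        rw [pt_add']; simp only [Prod.mk.injEq]; omega,
      show ((i, j - 1, k) : Z3) + (0, 0, -1) = (i, j - 1, k - 1) by
        rw [pt_add']; simp only [Prod.mk.injEq]; omega,
      show ((i, j - 1, k) : Z3) + (-1, 0, -1) = (i - 1, j - 1, k - 1) by
        rw [pt_add']; simp only [Prod.mk.injEq]; omega] at h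
  have e6 : fC C (i - 1, j, k - 1) * fC C (i, j - 1, k - 1) /
      (fC C (i, j, k - 1) * fC C (i - 1, j - 1, k - 1)) = C.Cc (i, j, k - 1) := by
    have h := match_c hpos hyd (p := (i, j, k - 1)) (oct_mk hi hj (by omega))
    rwa [show (Cf (fC C)).Cc (i, j, k - 1) = fC C ((i, j, k - 1) + (-1, 0, 0)) *
        fC C ((i, j, k - 1) + (0, -1, 0)) /
        (fC C (i, j, k - 1) * fC C ((i, j, k - 1) + (-1, -1, 0))) from rfl,
      show ((i, j, k - 1) : Z3) + (-1, 0, 0) = (i - 1, j, k - 1) by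
        rw [pt_add']; simp only [Prod.mk.injEq]; omega,
      show ((i, j, k - 1) : Z3) + (0, -1, 0) = (i, j - 1, k - 1) by
        rw [pt_add']; simp only [Prod.mk.injEq]; omega,
      show ((i, j, k - 1) : Z3) + (-1, -1, 0) = (i - 1, j - 1, k - 1) by
        rw [pt_add']; simp only [Prod.mk.injEq]; omega] at h
  -- YD relations
  have hyd0 := hyd (i, j, k) (oct_mk hi hj hk)
  rw [show ((i, j, k) : Z3) + (-1, 0, 0) = (i - 1, j, k) by
      rw [pt_add']; simp only [Prod.mk.injEq]; omega,
    show ((i, j, k) : Z3) + (0, -1, 0) = (i, j - 1, k) by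
      rw [pt_add']; simp only [Prod.mk.injEq]; omega,
    show ((i, j, k) : Z3) + (0, 0, -1) = (i, j, k - 1) by
      rw [pt_add']; simp only [Prod.mk.injEq]; omega] at hyd0
  have hS : C.S (i, j, k) = C.Ca (i, j, k) * C.Cb (i, j, k) + C.Ca (i, j, k) * C.Cc (i, j, k) +
      C.Cb (i, j, k) * C.Cc (i, j, k) := rfl
  have hs_pos : 0 < C.S (i, j, k) := S_pos hpos (oct_mk hi hj hk)
  have hca := (hpos (i, j, k) (oct_mk hi hj hk)).1
  have hcb := (hpos (i, j, k) (oct_mk hi hj hk)).2.1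
  have hcc := (hpos (i, j, k) (oct_mk hi hj hk)).2.2
  have hca1 := (hpos (i - 1, j, k) (oct_mk (by omega) hj hk)).1
  have hcb2 := (hpos (i, j - 1, k) (oct_mk hi (by omega) hk)).2.1
  have hcc3 := (hpos (i, j, k - 1) (oct_mk hi hj (by omega))).2.2
  have ha1 : C.Ca (i, j, k) = C.S (i, j, k) * C.Ca (i - 1, j, k) := by
    have h := hyd0.1
    rwa [← div_eq_mul_inv, div_eq_iff (ne_of_gt hca1)] at h
  have hb2 : C.Cb (i, j, k) = C.S (i, j, k) * C.Cb (i, j - 1, k) := by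
    have h := hyd0.2.1
    rwa [← div_eq_mul_inv, div_eq_iff (ne_of_gt hcb2)] at h
  have hc3 : C.Cc (i, j, k) = C.S (i, j, k) * C.Cc (i, j, k - 1) := by
    have h := hyd0.2.2
    rwa [← div_eq_mul_inv, div_eq_iff (ne_of_gt hcc3)] at h
  -- product forms
  rw [div_eq_iff (ne_of_gt (mul_pos hu0 hu23))] at e1
  rw [div_eq_iff (ne_of_gt (mul_pos hu0 hu13))] at e2
  rw [div_eq_iff (ne_of_gt (mul_pos hu0 hu12))] at e3
  rw [div_eq_iff (ne_of_gt (mul_pos hu1 huv))] at e4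
  rw [div_eq_iff (ne_of_gt (mul_pos hu2 huv))] at e5
  rw [div_eq_iff (ne_of_gt (mul_pos hu3 huv))] at e6
  set u0 := fC C (i, j, k)
  set u1 := fC C (i - 1, j, k)
  set u2 := fC C (i, j - 1, k)
  set u3 := fC C (i, j, k - 1)
  set u12 := fC C (i - 1, j - 1, k)
  set u13 := fC C (i - 1, j, k - 1)
  set u23 := fC C (i, j - 1, k - 1)
  set v := fC C (i - 1, j - 1, k - 1)
  set a := C.Ca (i, j, k)
  set b := C.Cb (i, j, k)
  set c := C.Cc (i, j, k)
  set a1 := C.Ca (i - 1, j, k)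
  set b2 := C.Cb (i, j - 1, k)
  set c3 := C.Cc (i, j, k - 1)
  set s := C.S (i, j, k)
  -- key polynomial identities
  have I1 : a ^ 2 * (u1 * u23) * (u0 * v) = s * ((u2 * u13) * (u3 * u12)) := by
    calc a ^ 2 * (u1 * u23) * (u0 * v)
        = s * (a1 * (u1 * v)) * (a * (u0 * u23)) := by rw [ha1]; ring
      _ = s * (u12 * u13) * (u2 * u3) := by rw [← e4, ← e1]
      _ = s * ((u2 * u13) * (u3 * u12)) := by ring
  have I2 : b ^ 2 * (u2 * u13) * (u0 * v) = s * ((u1 * u23) * (u3 * u12)) := by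
    calc b ^ 2 * (u2 * u13) * (u0 * v)
        = s * (b2 * (u2 * v)) * (b * (u0 * u13)) := by rw [hb2]; ring
      _ = s * (u12 * u23) * (u1 * u3) := by rw [← e5, ← e2]
      _ = s * ((u1 * u23) * (u3 * u12)) := by ring
  have I3 : c ^ 2 * (u3 * u12) * (u0 * v) = s * ((u1 * u23) * (u2 * u13)) := by
    calc c ^ 2 * (u3 * u12) * (u0 * v)
        = s * (c3 * (u3 * v)) * (c * (u0 * u12)) := by rw [hc3]; ring
      _ = s * (u13 * u23) * (u1 * u2) := by rw [← e6, ← e3]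
      _ = s * ((u1 * u23) * (u2 * u13)) := by ring
  have cancel : ∀ X Y T : ℝ, 0 < X → 0 < Y → 0 < T → X ^ 2 * T = Y ^ 2 * T → X = Y := by
    intro X Y T hX hY hT h
    have h2 : X ^ 2 = Y ^ 2 := mul_right_cancel₀ (ne_of_gt hT) h
    have h3 : (X - Y) * (X + Y) = 0 := by linear_combination h2
    rcases mul_eq_zero.mp h3 with h4 | h4
    · linarith
    · nlinarith
  have g3 : a * b * (u0 * v) = s * (u3 * u12) := by
    refine cancel _ _ ((u1 * u23) * (u2 * u13)) (mul_pos (mul_pos hca hcb) (mul_pos hu0 huv))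
      (mul_pos hs_pos (mul_pos hu3 hu12)) (mul_pos (mul_pos hu1 hu23) (mul_pos hu2 hu13)) ?_
    linear_combination (b ^ 2 * (u2 * u13) * (u0 * v)) * I1 +
      (s * ((u2 * u13) * (u3 * u12))) * I2
  have g1 : b * c * (u0 * v) = s * (u1 * u23) := by
    refine cancel _ _ ((u2 * u13) * (u3 * u12)) (mul_pos (mul_pos hcb hcc) (mul_pos hu0 huv))
      (mul_pos hs_pos (mul_pos hu1 hu23)) (mul_pos (mul_pos hu2 hu13) (mul_pos hu3 hu12)) ?_
    linear_combination (c ^ 2 * (u3 * u12) * (u0 * v)) * I2 +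
      (s * ((u1 * u23) * (u3 * u12))) * I3
  have g2 : a * c * (u0 * v) = s * (u2 * u13) := by
    refine cancel _ _ ((u1 * u23) * (u3 * u12)) (mul_pos (mul_pos hca hcc) (mul_pos hu0 huv))
      (mul_pos hs_pos (mul_pos hu2 hu13)) (mul_pos (mul_pos hu1 hu23) (mul_pos hu3 hu12)) ?_
    linear_combination (c ^ 2 * (u3 * u12) * (u0 * v)) * I1 +
      (s * ((u2 * u13) * (u3 * u12))) * I3
  have final : s * (u0 * v) = s * (u1 * u23 + u2 * u13 + u3 * u12) := by
    linear_combination g1 + g2 + g3 + (u0 * v) * hS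
  exact mul_left_cancel₀ (ne_of_gt hs_pos) final

end CubeMain

theorem statement1 (C : Conduct) (hpos : C.Pos) (hyd : C.YD) :
    ∃ f : Z3 → ℝ, PosOn f ∧ CubeRec f ∧
      ∀ p : Z3, oct p →
        (Cf f).Ca p = C.Ca p ∧ (Cf f).Cb p = C.Cb p ∧ (Cf f).Cc p = C.Cc p := by
  exact ⟨fC C, fun p _ => fC_pos hpos p, cube_rec hpos hyd,
    fun p hp => ⟨match_a hpos hyd hp, match_b hpos hyd hp, match_c hpos hyd hp⟩⟩

end
end

section
/- Let f : ℤ³≤0 → ℝ>0 satisfy the cube recurrence and let C = C^f. Then for all (i,j,k) ∈ ℤ³≤0: U(i,j,k) = f(i−1,j,k)f(i,j−1,k−1)/(f(i−1,j−1,k−1)f(i,j,k)), V(i,j,k) = f(i,j−1,k)f(i−1,j,k−1)/(f(i−1,j−1,k−1)f(i,j,k)), and W(i,j,k) = f(i,j,k−1)f(i−1,j−1,k)/(f(i−1,j−1,k−1)f(i,j,k)). In particular U(i,j,k) + V(i,j,k) + W(i,j,k) = 1. -/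
open scoped BigOperators
open scoped Classical

noncomputable section

/-! ### The statement -/

set_option maxHeartbeats 2000000 in
theorem statement3 (f : Z3 → ℝ) (hpos : PosOn f) (hrec : CubeRec f) :
    ∀ p : Z3, oct p →
      (Cf f).U p = f (p + (-1, 0, 0)) * f (p + (0, -1, -1)) / (f (p + (-1, -1, -1)) * f p) ∧
      (Cf f).V p = f (p + (0, -1, 0)) * f (p + (-1, 0, -1)) / (f (p + (-1, -1, -1)) * f p) ∧
      (Cf f).W p = f (p + (0, 0, -1)) * f (p + (-1, -1, 0)) / (f (p + (-1, -1, -1)) * f p) ∧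
      (Cf f).U p + (Cf f).V p + (Cf f).W p = 1 := by
  have key : ∀ a b c : ℤ, a ≤ 0 → b ≤ 0 → c ≤ 0 → 0 < f (a, b, c) :=
    fun a b c ha hb hc => hpos _ ⟨ha, hb, hc⟩
  rintro ⟨i, j, k⟩ ⟨hi, hj, hk⟩
  simp only at hi hj hk
  have hr := hrec (i, j, k) ⟨hi, hj, hk⟩
  simp only [Conduct.U, Conduct.V, Conduct.W, Conduct.Δ, Cf, Prod.mk_add_mk] at hr ⊢
  ring_nf at hr ⊢
  have hA : 0 < f (i, j, k) := key _ _ _ hi hj hk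
  have ha : 0 < f (-1 + i, j, k) := key _ _ _ (by omega) hj hk
  have hb : 0 < f (i, -1 + j, k) := key _ _ _ hi (by omega) hk
  have hc : 0 < f (i, j, -1 + k) := key _ _ _ hi hj (by omega)
  have hab : 0 < f (-1 + i, -1 + j, k) := key _ _ _ (by omega) (by omega) hk
  have hac : 0 < f (-1 + i, j, -1 + k) := key _ _ _ (by omega) hj (by omega)
  have hbc : 0 < f (i, -1 + j, -1 + k) := key _ _ _ hi (by omega) (by omega)
  have habc : 0 < f (-1 + i, -1 + j, -1 + k) := key _ _ _ (by omega) (by omega) (by omega)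
  generalize hg1 : f (i, j, k) = A at hr hA ⊢
  generalize hg2 : f (-1 + i, j, k) = a at hr ha ⊢
  generalize hg3 : f (i, -1 + j, k) = b at hr hb ⊢
  generalize hg4 : f (i, j, -1 + k) = c at hr hc ⊢
  generalize hg5 : f (-1 + i, -1 + j, k) = ab at hr hab ⊢
  generalize hg6 : f (-1 + i, j, -1 + k) = ac at hr hac ⊢
  generalize hg7 : f (i, -1 + j, -1 + k) = bc at hr hbc ⊢
  generalize hg8 : f (-1 + i, -1 + j, -1 + k) = abc at hr habc ⊢
  have hD : bc * ac * ab ^ 2 * abc⁻¹ ^ 2 * b⁻¹ * a⁻¹ + bc * ac ^ 2 * ab * abc⁻¹ ^ 2 * c⁻¹ * a⁻¹ +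
      bc ^ 2 * ac * ab * abc⁻¹ ^ 2 * b⁻¹ * c⁻¹ = ab * ac * bc * A * (a * b * c * abc)⁻¹ := by
    rw [← div_eq_mul_inv]
    field_simp [hA.ne', ha.ne', hb.ne', hc.ne', hab.ne', hac.ne', hbc.ne', habc.ne']
    linear_combination (-1 : ℝ) * hr
  rw [hD]
  refine ⟨?_, ?_, ?_, ?_⟩
  · field_simp [hA.ne', ha.ne', hb.ne', hc.ne', hab.ne', hac.ne', hbc.ne', habc.ne']
  · field_simp [hA.ne', ha.ne', hb.ne', hc.ne', hab.ne', hac.ne', hbc.ne', habc.ne']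
  · field_simp [hA.ne', ha.ne', hb.ne', hc.ne', hab.ne', hac.ne', hbc.ne', habc.ne']
  · field_simp [hA.ne', ha.ne', hb.ne', hc.ne', hab.ne', hac.ne', hbc.ne', habc.ne']
    linear_combination (-1 : ℝ) * hr

end
end

section
/- Let C be a positive Y−Δ consistent conductance function, let j,k ≥ 0, and let ℐ be any set of initial conditions containing the rhombus r_a(0,−j,−k). Then ℙ^C_ℐ({G ∈ 𝒢(ℐ) : E_a(0,−j,−k) ∈ G}) = 0; that is, the edge probability p(0,−j,−k) vanishes. Equivalently, no ℐ-grove contains the long diagonal E_a(0,−j,−k) = {(0,−j−1,−k),(0,−j,−k−1)}. -/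
open scoped BigOperators
open scoped Classical

noncomputable section

/-! ### Auxiliary lemmas for Statement 14 -/

lemma sum3_add' (p q : Z3) : sum3 (p + q) = sum3 p + sum3 q := by
  simp [sum3, Prod.fst_add, Prod.snd_add]; ring

lemma faceI (D : LowerData) (V : Z3) (h0 : V.1 = 0) (hL : V ∈ D.L) : V ∈ D.I := by
  refine ⟨hL, fun hc => ?_⟩
  have h1 := (D.sub _ hc).1
  simp only [Prod.fst_add, h0] at h1
  norm_num at h1

lemma reach_down (D : LowerData) (G : Grove D.I) (d₀ : ℤ)
    (hmin : ∀ q : Z3, q.1 = 0 → rhA q ⊆ D.I → Ea q ∈ G.edges → d₀ ≤ sum3 q)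
    (w : Z3) (h0 : w.1 = 0) (hI : w ∈ D.I) (hd : sum3 w < d₀) :
    ∀ T : ℕ, (graphOf G.edges).Reachable w (w + ((0 : ℤ), -(T : ℤ), -(T : ℤ))) := by
  have hwL : w ∈ D.L := hI.1
  have key : ∀ t : ℕ, rhA (w + ((0 : ℤ), -(t : ℤ), -(t : ℤ))) ⊆ D.I := by
    intro t V hV
    have h1 : ∀ δ : Z3, δ.1 = 0 → δ.2.1 ≤ 0 → δ.2.2 ≤ 0 → w + δ ∈ D.I := by
      intro δ hδ1 hδ2 hδ3
      refine faceI D _ (by simp [Prod.fst_add, h0, hδ1]) (D.dc w hwL _ ?_)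
      simp only [Prod.le_def, Prod.fst_add, Prod.snd_add]
      omega
    simp only [rhA, Set.mem_insert_iff, Set.mem_singleton_iff] at hV
    rcases hV with rfl | rfl | rfl | rfl
    · exact h1 _ rfl (by simp) (by simp)
    · rw [add_assoc]; exact h1 _ (by simp) (by simp) (by simp)
    · rw [add_assoc]; exact h1 _ (by simp) (by simp) (by simp)
    · rw [add_assoc]; exact h1 _ (by simp) (by simp) (by simp)
  intro T
  induction T with
  | zero =>
    have h : ((0 : ℤ), -((0 : ℕ) : ℤ), -((0 : ℕ) : ℤ)) = (0 : Z3) := by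
      simp [Prod.ext_iff]
    rw [h, add_zero]
  | succ t ih =>
    refine ih.trans (SimpleGraph.Adj.reachable ?_)
    have hsub := key t
    have hdq : sum3 (w + ((0 : ℤ), -(t : ℤ), -(t : ℤ))) = sum3 w - 2 * t := by
      rw [sum3_add']; simp [sum3]; ring
    have hnotE : Ea (w + ((0 : ℤ), -(t : ℤ), -(t : ℤ))) ∉ G.edges := by
      intro hc
      have := hmin _ (by simp [Prod.fst_add, h0]) hsub hc
      omega
    have hea : ea (w + ((0 : ℤ), -(t : ℤ), -(t : ℤ))) ∈ G.edges := by
      rcases G.diagA _ hsub with ⟨h1, _⟩ | ⟨h1, _⟩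
      · exact absurd h1 hnotE
      · exact h1
    have heq : w + ((0 : ℤ), -((t + 1 : ℕ) : ℤ), -((t + 1 : ℕ) : ℤ)) =
        (w + ((0 : ℤ), -(t : ℤ), -(t : ℤ))) + ((0 : ℤ), -1, -1) := by
      simp only [Prod.ext_iff, Prod.fst_add, Prod.snd_add]
      push_cast
      refine ⟨by ring, by ring, by ring⟩
    refine ⟨?_, ?_⟩
    · rw [heq]
      intro hc
      have := congrArg (fun p : Z3 => p.2.1) hc
      simp only [Prod.snd_add, Prod.fst_add] at this
      omega
    · rw [heq]
      simpa [ea] using hea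

lemma exists_BSet (N P Q : ℤ) (hP : P < 0) (hQ : Q < 0) (hsum : P + Q = -N - 1) :
    ∃ S ∈ BSets N, ((0 : ℤ), P, Q) ∈ S ∧ ∀ x ∈ S, x.1 = 0 → x = ((0 : ℤ), P, Q) := by
  rcases lt_trichotomy P Q with h | h | h
  · refine ⟨{(Q, P, (0 : ℤ)), ((0 : ℤ), P, Q)}, ?_, by simp, ?_⟩
    · refine Set.mem_union_left _ (Set.mem_union_left _ ?_)
      exact ⟨Q, P, hQ, h, Or.inl (by omega), Or.inr (Or.inl rfl)⟩
    · intro x hx hx0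
      simp only [Set.mem_insert_iff, Set.mem_singleton_iff] at hx
      rcases hx with rfl | rfl
      · simp only at hx0; omega
      · rfl
  · subst h
    refine ⟨{((0 : ℤ), P, P), (P, (0 : ℤ), P), (P, P, (0 : ℤ))}, ?_, by simp, ?_⟩
    · refine Set.mem_union_left _ (Set.mem_union_right _ ?_)
      exact ⟨P, Or.inl (by omega), rfl⟩
    · intro x hx hx0
      simp only [Set.mem_insert_iff, Set.mem_singleton_iff] at hx
      rcases hx with rfl | rfl | rfl
      · rfl
      · simp only at hx0; omega
      · simp only at hx0; omega
  · refine ⟨{((0 : ℤ), P, Q), (P, (0 : ℤ), Q)}, ?_, by simp, ?_⟩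
    · refine Set.mem_union_left _ (Set.mem_union_left _ ?_)
      exact ⟨P, Q, hP, h, Or.inl (by omega), Or.inl rfl⟩
    · intro x hx hx0
      simp only [Set.mem_insert_iff, Set.mem_singleton_iff] at hx
      rcases hx with rfl | rfl
      · rfl
      · simp only at hx0; omega

lemma no_face_long (D : LowerData) (G : Grove D.I) (p₀ : Z3) (h00 : p₀.1 = 0)
    (hrh0 : rhA p₀ ⊆ D.I) (hE0 : Ea p₀ ∈ G.edges) : False := by
  classical
  obtain ⟨N₀, hsA, -, -⟩ := G.short
  have hbdd : ∀ d : ℤ, (∃ q : Z3, q.1 = 0 ∧ rhA q ⊆ D.I ∧ Ea q ∈ G.edges ∧ sum3 q = d) →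
      -N₀ - 1 ≤ d := by
    rintro d ⟨q, hq1, hqI, hqE, hqd⟩
    by_contra hlt
    push_neg at hlt
    have hshort : ea q ∈ G.edges := by
      refine hsA q hqI ?_
      intro v hv
      simp only [rhA, Set.mem_insert_iff, Set.mem_singleton_iff] at hv
      rcases hv with rfl | rfl | rfl | rfl
      · rw [hqd]; omega
      all_goals rw [sum3_add', hqd]; simp only [sum3]; omega
    rcases G.diagA q hqI with ⟨-, h2⟩ | ⟨-, h2⟩
    · exact h2 hshort
    · exact h2 hqE
  obtain ⟨d₀, ⟨p₁, h1, hI1, hE1, hd1⟩, hmin⟩ :=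
    Int.exists_least_of_bdd ⟨-N₀ - 1, hbdd⟩ ⟨sum3 p₀, p₀, h00, hrh0, hE0, rfl⟩
  have hmin' : ∀ q : Z3, q.1 = 0 → rhA q ⊆ D.I → Ea q ∈ G.edges → d₀ ≤ sum3 q :=
    fun q ha hb hc => hmin _ ⟨q, ha, hb, hc, rfl⟩
  obtain ⟨x, a, b⟩ := p₁
  simp only at h1
  subst h1
  have hab : a + b = d₀ := by simpa [sum3] using hd1
  -- the two endpoints of the deepest long face edge
  have hu'eq : ((0 : ℤ), a - 1, b) = ((0 : ℤ), a, b) + ((0 : ℤ), -1, 0) := by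
    simp only [Prod.ext_iff, Prod.mk_add_mk]; omega
  have hv'eq : ((0 : ℤ), a, b - 1) = ((0 : ℤ), a, b) + ((0 : ℤ), 0, -1) := by
    simp only [Prod.ext_iff, Prod.mk_add_mk]; omega
  have hu'I : ((0 : ℤ), a - 1, b) ∈ D.I := by
    rw [hu'eq]; exact hI1 (by simp [rhA])
  have hv'I : ((0 : ℤ), a, b - 1) ∈ D.I := by
    rw [hv'eq]; exact hI1 (by simp [rhA])
  obtain ⟨N₁, hconn⟩ := G.conn
  -- choose T large
  set B : ℤ := max (max (a + 1) (b + 1)) (N₁ + d₀) with hB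
  set T : ℕ := B.toNat with hT
  have hTB : B ≤ (T : ℤ) := Int.self_le_toNat B
  have hTa : a + 1 ≤ (T : ℤ) := le_trans (le_trans (le_max_left _ _) (le_max_left _ _)) hTB
  have hTb : b + 1 ≤ (T : ℤ) := le_trans (le_trans (le_max_right _ _) (le_max_left _ _)) hTB
  have hTN : N₁ + d₀ ≤ (T : ℤ) := le_trans (le_max_right _ _) hTB
  have hTnn : (0 : ℤ) ≤ (T : ℤ) := Int.natCast_nonneg T
  set N : ℤ := 2 * (T : ℤ) - d₀ with hN
  have hN₁N : N₁ ≤ N := by omega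
  -- reachability to the two deep chain vertices
  have R1 : (graphOf G.edges).Reachable ((0 : ℤ), a - 1, b) ((0 : ℤ), a - 1 - T, b - T) := by
    have := reach_down D G d₀ hmin' ((0 : ℤ), a - 1, b) rfl hu'I
      (by simp [sum3]; omega) T
    have heq : ((0 : ℤ), a - 1, b) + ((0 : ℤ), -(T : ℤ), -(T : ℤ)) =
        ((0 : ℤ), a - 1 - T, b - T) := by
      simp [Prod.ext_iff]; constructor <;> ring
    rwa [heq] at this
  have R2 : (graphOf G.edges).Reachable ((0 : ℤ), a - 1, b) ((0 : ℤ), a - T, b - 1 - T) := by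
    have hadj : (graphOf G.edges).Adj ((0 : ℤ), a - 1, b) ((0 : ℤ), a, b - 1) := by
      refine ⟨?_, ?_⟩
      · intro hc
        have := congrArg (fun p : Z3 => p.2.1) hc
        simp only at this
        omega
      · have : Ea ((0 : ℤ), a, b) = s(((0 : ℤ), a - 1, b), ((0 : ℤ), a, b - 1)) := by
          rw [Ea, ← hu'eq, ← hv'eq]
        rw [← this]
        exact hE1
    have := reach_down D G d₀ hmin' ((0 : ℤ), a, b - 1) rfl hv'I
      (by simp [sum3]; omega) T
    have heq : ((0 : ℤ), a, b - 1) + ((0 : ℤ), -(T : ℤ), -(T : ℤ)) =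
        ((0 : ℤ), a - T, b - 1 - T) := by
      simp [Prod.ext_iff]; constructor <;> ring
    rw [heq] at this
    exact hadj.reachable.trans this
  -- the two distinct boundary sets
  obtain ⟨S₁, hS₁, hw₁S₁, huniq₁⟩ :=
    exists_BSet N (a - 1 - T) (b - T) (by omega) (by omega) (by omega)
  obtain ⟨S₂, hS₂, hw₂S₂, huniq₂⟩ :=
    exists_BSet N (a - T) (b - 1 - T) (by omega) (by omega) (by omega)
  obtain ⟨S₀, -, hS₀uniq⟩ := (hconn N hN₁N).2 ((0 : ℤ), a - 1, b) hu'I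
  have e₁ : S₁ = S₀ := hS₀uniq S₁ ⟨hS₁, _, hw₁S₁, R1⟩
  have e₂ : S₂ = S₀ := hS₀uniq S₂ ⟨hS₂, _, hw₂S₂, R2⟩
  have hw₂S₁ : ((0 : ℤ), a - T, b - 1 - T) ∈ S₁ := by
    rw [e₁, ← e₂]; exact hw₂S₂
  have := huniq₁ _ hw₂S₁ rfl
  simp only [Prod.mk.injEq] at this
  omega


/-! ### The statement -/

theorem statement14 (C : Conduct) (hpos : C.Pos) (hyd : C.YD) (j k : ℤ)
    (hj : 0 ≤ j) (hk : 0 ≤ k) (D : LowerData) (hrh : rhA ((0 : ℤ), -j, -k) ⊆ D.I) :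
    edgeProb C D (Ea ((0 : ℤ), -j, -k)) = 0 ∧
      ∀ G : Grove D.I, Ea ((0 : ℤ), -j, -k) ∉ G.edges := by
  have key : ∀ G : Grove D.I, Ea ((0 : ℤ), -j, -k) ∉ G.edges := fun G hE =>
    no_face_long D G ((0 : ℤ), -j, -k) rfl hrh hE
  refine ⟨?_, key⟩
  unfold edgeProb
  have h0 : ∀ G : Grove D.I, (if Ea ((0 : ℤ), -j, -k) ∈ G.edges then wt C G else 0) = 0 :=
    fun G => if_neg (key G)
  rw [tsum_congr h0, tsum_zero, zero_div]

end
end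

section
/- For all positive real numbers a, b, c, d, e, f, consider the Laurent polynomial P(z,w) = (a+b+d+e+f·(2−z−z⁻¹))·(a+b+d+e+c·(2−z−z⁻¹)) − (aw+bzw+d+ez⁻¹)·(aw⁻¹+bz⁻¹w⁻¹+d+ez) in ℝ[z^{±1}, w^{±1}] (the determinant of the vector-bundle Laplacian of the torus graph T_{1,2} with monodromies z and w). The Newton polygon of P, i.e. the convex hull in ℝ² of the set of exponent vectors (i,j) such that the coefficient of z^i w^j in P is nonzero, is the hexagon with vertices (2,0), (2,1), (0,1), (−2,0), (−2,−1), (0,−1). -/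
noncomputable section

/-- The ring of real Laurent polynomials in two variables `z, w`, realized as the
monoid algebra `ℝ[ℤ × ℤ]`. -/
abbrev LP : Type := AddMonoidAlgebra ℝ (ℤ × ℤ)

/-- The variable `z`. -/
def zz : LP := AddMonoidAlgebra.single ((1 : ℤ), (0 : ℤ)) 1
/-- The variable `z⁻¹`. -/
def zi : LP := AddMonoidAlgebra.single ((-1 : ℤ), (0 : ℤ)) 1
/-- The variable `w`. -/
def ww : LP := AddMonoidAlgebra.single ((0 : ℤ), (1 : ℤ)) 1
/-- The variable `w⁻¹`. -/
def wi : LP := AddMonoidAlgebra.single ((0 : ℤ), (-1 : ℤ)) 1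
/-- Constants. -/
def cst (r : ℝ) : LP := AddMonoidAlgebra.single ((0 : ℤ), (0 : ℤ)) r

/-- The characteristic polynomial `P(z,w) = det Δ(z,w)` of the vector-bundle Laplacian of
`T_{1,2}` with conductances `a, b, c, d, e, f` and monodromies `z, w`. -/
def Plap (a b c d e f : ℝ) : LP :=
  (cst (a + b + d + e) + cst f * (2 - zz - zi)) *
      (cst (a + b + d + e) + cst c * (2 - zz - zi)) -
    (cst a * ww + cst b * zz * ww + cst d + cst e * zi) *
      (cst a * wi + cst b * zi * wi + cst d + cst e * zz)

lemma addap (F G : LP) (q : ℤ×ℤ) : (F + G).coeff q = F.coeff q + G.coeff q := rfl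
lemma subap (F G : LP) (q : ℤ×ℤ) : (F - G).coeff q = F.coeff q - G.coeff q := rfl
lemma singap (p : ℤ×ℤ) (r : ℝ) (q : ℤ×ℤ) :
    (AddMonoidAlgebra.single p r : LP).coeff q = if p = q then r else 0 := Finsupp.single_apply

lemma htwo : (2:LP) = AddMonoidAlgebra.single ((0:ℤ),(0:ℤ)) 2 := by
  rw [show (2:LP) = 1 + 1 by norm_num, AddMonoidAlgebra.one_def, ← AddMonoidAlgebra.single_add]
  norm_num
  rfl

set_option maxHeartbeats 2000000 in
lemma expand (a b c d e f : ℝ) :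
    Plap a b c d e f =
      AddMonoidAlgebra.single ((2:ℤ),(0:ℤ)) (c*f)
      + AddMonoidAlgebra.single ((-2:ℤ),(0:ℤ)) (c*f)
      + AddMonoidAlgebra.single ((1:ℤ),(0:ℤ)) (-((a+b+d+e)*(c+f)) - 4*c*f - (a*b+d*e))
      + AddMonoidAlgebra.single ((-1:ℤ),(0:ℤ)) (-((a+b+d+e)*(c+f)) - 4*c*f - (a*b+d*e))
      + AddMonoidAlgebra.single ((0:ℤ),(0:ℤ)) ((a+b+d+e)^2 + 2*(a+b+d+e)*(c+f) + 6*c*f - (a^2+b^2+d^2+e^2))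
      + AddMonoidAlgebra.single ((0:ℤ),(1:ℤ)) (-(a*d))
      + AddMonoidAlgebra.single ((1:ℤ),(1:ℤ)) (-(a*e+b*d))
      + AddMonoidAlgebra.single ((2:ℤ),(1:ℤ)) (-(b*e))
      + AddMonoidAlgebra.single ((0:ℤ),(-1:ℤ)) (-(a*d))
      + AddMonoidAlgebra.single ((-1:ℤ),(-1:ℤ)) (-(a*e+b*d))
      + AddMonoidAlgebra.single ((-2:ℤ),(-1:ℤ)) (-(b*e)) := by
  rw [Plap, htwo]
  simp only [cst, zz, zi, ww, wi, mul_add, add_mul, mul_sub, sub_mul,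
    AddMonoidAlgebra.single_mul_single, Prod.mk_add_mk]
  ext ⟨i, j⟩
  simp only [addap, subap, singap, Prod.mk.injEq]
  norm_num only
  split_ifs <;> first | omega | ring

/-- the half/half convex combination -/
lemma comb {V : Set (ℝ×ℝ)} {u v : ℝ×ℝ} (hu : u ∈ V) (hv : v ∈ V) :
    (1/2 : ℝ) • u + (1/2 : ℝ) • v ∈ convexHull ℝ V :=
  (convex_convexHull ℝ V) (subset_convexHull ℝ V hu) (subset_convexHull ℝ V hv)
    (by norm_num) (by norm_num) (by norm_num)

lemma support_subset (a b c d e f : ℝ) (q : ℤ×ℤ) (h : (Plap a b c d e f).coeff q ≠ 0) :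
    q ∈ ({((2:ℤ),(0:ℤ)), ((-2:ℤ),(0:ℤ)), ((1:ℤ),(0:ℤ)), ((-1:ℤ),(0:ℤ)), ((0:ℤ),(0:ℤ)),
      ((0:ℤ),(1:ℤ)), ((1:ℤ),(1:ℤ)), ((2:ℤ),(1:ℤ)), ((0:ℤ),(-1:ℤ)), ((-1:ℤ),(-1:ℤ)),
      ((-2:ℤ),(-1:ℤ))} : Set (ℤ×ℤ)) := by
  by_contra hq
  simp only [Set.mem_insert_iff, Set.mem_singleton_iff, not_or] at hq
  obtain ⟨h1,h2,h3,h4,h5,h6,h7,h8,h9,h10,h11⟩ := hq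
  apply h
  rw [expand]
  simp only [addap, singap]
  rw [if_neg (fun hh => h1 hh.symm), if_neg (fun hh => h2 hh.symm),
    if_neg (fun hh => h3 hh.symm), if_neg (fun hh => h4 hh.symm),
    if_neg (fun hh => h5 hh.symm), if_neg (fun hh => h6 hh.symm),
    if_neg (fun hh => h7 hh.symm), if_neg (fun hh => h8 hh.symm),
    if_neg (fun hh => h9 hh.symm), if_neg (fun hh => h10 hh.symm),
    if_neg (fun hh => h11 hh.symm)]
  norm_num

theorem statement18 (a b c d e f : ℝ) (ha : 0 < a) (hb : 0 < b) (hc : 0 < c)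
    (hd : 0 < d) (he : 0 < e) (hf : 0 < f) :
    convexHull ℝ ((fun q : ℤ × ℤ => ((q.1 : ℝ), (q.2 : ℝ))) ''
        {q : ℤ × ℤ | (Plap a b c d e f).coeff q ≠ 0}) =
      convexHull ℝ
        {((2 : ℝ), (0 : ℝ)), ((2 : ℝ), (1 : ℝ)), ((0 : ℝ), (1 : ℝ)),
          ((-2 : ℝ), (0 : ℝ)), ((-2 : ℝ), (-1 : ℝ)), ((0 : ℝ), (-1 : ℝ))} := by
  set V : Set (ℝ×ℝ) := {((2 : ℝ), (0 : ℝ)), ((2 : ℝ), (1 : ℝ)), ((0 : ℝ), (1 : ℝ)),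
          ((-2 : ℝ), (0 : ℝ)), ((-2 : ℝ), (-1 : ℝ)), ((0 : ℝ), (-1 : ℝ))} with hV
  have hv1 : ((2 : ℝ), (0 : ℝ)) ∈ V := by rw [hV]; norm_num [Set.mem_insert_iff]
  have hv2 : ((2 : ℝ), (1 : ℝ)) ∈ V := by rw [hV]; norm_num [Set.mem_insert_iff]
  have hv3 : ((0 : ℝ), (1 : ℝ)) ∈ V := by rw [hV]; norm_num [Set.mem_insert_iff]
  have hv4 : ((-2 : ℝ), (0 : ℝ)) ∈ V := by rw [hV]; norm_num [Set.mem_insert_iff]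
  have hv5 : ((-2 : ℝ), (-1 : ℝ)) ∈ V := by rw [hV]; norm_num [Set.mem_insert_iff]
  have hv6 : ((0 : ℝ), (-1 : ℝ)) ∈ V := by rw [hV]; norm_num [Set.mem_insert_iff]
  apply Set.Subset.antisymm
  · apply convexHull_min ?_ (convex_convexHull ℝ _)
    rintro x ⟨q, hq, rfl⟩
    have hqE := support_subset a b c d e f q hq
    simp only [Set.mem_insert_iff, Set.mem_singleton_iff] at hqE
    rcases hqE with rfl|rfl|rfl|rfl|rfl|rfl|rfl|rfl|rfl|rfl|rfl
    · exact subset_convexHull ℝ V (by norm_num; exact hv1)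
    · exact subset_convexHull ℝ V (by norm_num; exact hv4)
    · -- (1,0) = ½(2,1)+½(0,-1)
      have : ((fun q : ℤ × ℤ => ((q.1 : ℝ), (q.2 : ℝ))) ((1:ℤ),(0:ℤ)))
          = (1/2 : ℝ) • ((2:ℝ),(1:ℝ)) + (1/2 : ℝ) • ((0:ℝ),(-1:ℝ)) := by
        norm_num [Prod.ext_iff, Prod.smul_mk]
      rw [this]; exact comb hv2 hv6
    · have : ((fun q : ℤ × ℤ => ((q.1 : ℝ), (q.2 : ℝ))) ((-1:ℤ),(0:ℤ)))
          = (1/2 : ℝ) • ((0:ℝ),(1:ℝ)) + (1/2 : ℝ) • ((-2:ℝ),(-1:ℝ)) := by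
        norm_num [Prod.ext_iff, Prod.smul_mk]
      rw [this]; exact comb hv3 hv5
    · have : ((fun q : ℤ × ℤ => ((q.1 : ℝ), (q.2 : ℝ))) ((0:ℤ),(0:ℤ)))
          = (1/2 : ℝ) • ((2:ℝ),(0:ℝ)) + (1/2 : ℝ) • ((-2:ℝ),(0:ℝ)) := by
        norm_num [Prod.ext_iff, Prod.smul_mk]
      rw [this]; exact comb hv1 hv4
    · exact subset_convexHull ℝ V (by norm_num; exact hv3)
    · have : ((fun q : ℤ × ℤ => ((q.1 : ℝ), (q.2 : ℝ))) ((1:ℤ),(1:ℤ)))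
          = (1/2 : ℝ) • ((2:ℝ),(1:ℝ)) + (1/2 : ℝ) • ((0:ℝ),(1:ℝ)) := by
        norm_num [Prod.ext_iff, Prod.smul_mk]
      rw [this]; exact comb hv2 hv3
    · exact subset_convexHull ℝ V (by norm_num; exact hv2)
    · exact subset_convexHull ℝ V (by norm_num; exact hv6)
    · have : ((fun q : ℤ × ℤ => ((q.1 : ℝ), (q.2 : ℝ))) ((-1:ℤ),(-1:ℤ)))
          = (1/2 : ℝ) • ((-2:ℝ),(-1:ℝ)) + (1/2 : ℝ) • ((0:ℝ),(-1:ℝ)) := by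
        norm_num [Prod.ext_iff, Prod.smul_mk]
      rw [this]; exact comb hv5 hv6
    · exact subset_convexHull ℝ V (by norm_num; exact hv5)
  · apply convexHull_mono
    have e1 : (Plap a b c d e f).coeff ((2:ℤ),(0:ℤ)) = c*f := by
      rw [expand]; simp only [addap, singap]; norm_num [Prod.ext_iff]
    have e2 : (Plap a b c d e f).coeff ((2:ℤ),(1:ℤ)) = -(b*e) := by
      rw [expand]; simp only [addap, singap]; norm_num [Prod.ext_iff]
    have e3 : (Plap a b c d e f).coeff ((0:ℤ),(1:ℤ)) = -(a*d) := by
      rw [expand]; simp only [addap, singap]; norm_num [Prod.ext_iff]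
    have e4 : (Plap a b c d e f).coeff ((-2:ℤ),(0:ℤ)) = c*f := by
      rw [expand]; simp only [addap, singap]; norm_num [Prod.ext_iff]
    have e5 : (Plap a b c d e f).coeff ((-2:ℤ),(-1:ℤ)) = -(b*e) := by
      rw [expand]; simp only [addap, singap]; norm_num [Prod.ext_iff]
    have e6 : (Plap a b c d e f).coeff ((0:ℤ),(-1:ℤ)) = -(a*d) := by
      rw [expand]; simp only [addap, singap]; norm_num [Prod.ext_iff]
    rintro x hx
    rw [hV] at hx
    simp only [Set.mem_insert_iff, Set.mem_singleton_iff] at hx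
    rcases hx with rfl|rfl|rfl|rfl|rfl|rfl
    · refine ⟨((2:ℤ),(0:ℤ)), ?_, by norm_num⟩
      simp only [Set.mem_setOf_eq, e1]
      positivity
    · refine ⟨((2:ℤ),(1:ℤ)), ?_, by norm_num⟩
      simp only [Set.mem_setOf_eq, e2]
      exact neg_ne_zero.mpr (ne_of_gt (mul_pos hb he))
    · refine ⟨((0:ℤ),(1:ℤ)), ?_, by norm_num⟩
      simp only [Set.mem_setOf_eq, e3]
      exact neg_ne_zero.mpr (ne_of_gt (mul_pos ha hd))
    · refine ⟨((-2:ℤ),(0:ℤ)), ?_, by norm_num⟩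
      simp only [Set.mem_setOf_eq, e4]
      positivity
    · refine ⟨((-2:ℤ),(-1:ℤ)), ?_, by norm_num⟩
      simp only [Set.mem_setOf_eq, e5]
      exact neg_ne_zero.mpr (ne_of_gt (mul_pos hb he))
    · refine ⟨((0:ℤ),(-1:ℤ)), ?_, by norm_num⟩
      simp only [Set.mem_setOf_eq, e6]
      exact neg_ne_zero.mpr (ne_of_gt (mul_pos ha hd))


end
end
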